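/- Let K be a field of characteristic 0, let x_1, x_2, …, x_m be algebraically independent variables over K, and let E be an algebraic field extension of the rational function field K(x_1, x_2, …, x_m). Let D_{x_1}, D_{x_2}, …, D_{x_m} be derivations of E whose restrictions to K(x_1, x_2, …, x_m) are the partial derivatives ∂/∂x_1, ∂/∂x_2, …, ∂/∂x_m respectively. If y ∈ E satisfies D_{x_1}(y) = D_{x_2}(y) = … = D_{x_m}(y) = 0, then y is algebraic over K. -/

import Mathlib

open scoped BigOperators

open MvPolynomial

lemma coeff_pderiv' {σ : Type*} [DecidableEq σ] {R : Type*} [CommSemiring R]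
    (j : σ) (s : σ →₀ ℕ) (Q : MvPolynomial σ R) :
    coeff s (pderiv j Q) = (s j + 1) * coeff (s + Finsupp.single j 1) Q := by
  induction Q using MvPolynomial.induction_on' with
  | add p q hp hq => simp [hp, hq, mul_add]
  | monomial t a =>
    rw [pderiv_monomial, coeff_monomial, coeff_monomial]
    by_cases h : t = s + Finsupp.single j 1
    · subst h
      have h1 : s + Finsupp.single j 1 - Finsupp.single j 1 = s := by
        ext i; simp [Finsupp.tsub_apply, Finsupp.add_apply, Finsupp.single_apply]
      rw [if_pos h1]
      have h4 : ((s + Finsupp.single j 1) : _ →₀ ℕ) j = s j + 1 := by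
        simp [Finsupp.add_apply, Finsupp.single_apply]
      rw [h4]
      push_cast
      simp
      ring
    · rw [if_neg h]
      by_cases h2 : t - Finsupp.single j 1 = s
      · rw [if_pos h2]
        have htj : t j = 0 := by
          by_contra htj
          apply h
          ext i
          by_cases hij : i = j
          · rw [hij]
            have h3 := DFunLike.congr_fun h2 j
            simp [Finsupp.tsub_apply, Finsupp.add_apply, Finsupp.single_apply] at h3 ⊢
            omega
          · have h3 := DFunLike.congr_fun h2 i
            simp [Finsupp.tsub_apply, Finsupp.add_apply, Finsupp.single_apply, Ne.symm hij] at h3 ⊢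
            omega
        simp [htj]
      · rw [if_neg h2, mul_zero]

lemma eq_C_of_pderiv_eq_zero' {σ : Type*} [DecidableEq σ] {R : Type*} [Field R] [CharZero R]
    (Q : MvPolynomial σ R) (h : ∀ j, pderiv j Q = 0) :
    Q = C (coeff 0 Q) := by
  ext s
  rcases eq_or_ne s 0 with rfl | hs
  · simp
  · rw [coeff_C, if_neg (Ne.symm hs)]
    obtain ⟨j, hj⟩ : ∃ j, s j ≠ 0 := by
      by_contra hc
      push_neg at hc
      exact hs (Finsupp.ext hc)
    have key := coeff_pderiv' j (s - Finsupp.single j 1) Q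
    rw [h j, coeff_zero] at key
    have hsum : (s - Finsupp.single j 1) + Finsupp.single j 1 = s := by
      ext i
      rcases eq_or_ne i j with rfl | hij
      · simp [Finsupp.tsub_apply, Finsupp.add_apply, Finsupp.single_apply]
        omega
      · simp [Finsupp.tsub_apply, Finsupp.add_apply, Finsupp.single_apply, Ne.symm hij]
    rw [hsum] at key
    have hcast : ((((s - Finsupp.single j 1) : σ →₀ ℕ) j : R) + 1) ≠ 0 :=
      Nat.cast_add_one_ne_zero _
    exact (mul_eq_zero.mp key.symm).resolve_left hcast
  
lemma totalDegree_pderiv_lt' {σ : Type*} [DecidableEq σ] {R : Type*} [CommRing R]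
    (j : σ) (Q : MvPolynomial σ R) (hQ : pderiv j Q ≠ 0) :
    (pderiv j Q).totalDegree < Q.totalDegree := by
  have hQne : Q ≠ 0 := by rintro rfl; simp at hQ
  have hdeg : 1 ≤ Q.totalDegree := by
    by_contra hd
    push_neg at hd
    have h0 : Q.totalDegree = 0 := by omega
    obtain ⟨c, rfl⟩ : ∃ c, Q = C c := by
      refine ⟨coeff 0 Q, ?_⟩
      ext s
      rcases eq_or_ne s 0 with rfl | hs
      · simp
      · rw [coeff_C, if_neg (Ne.symm hs)]
        by_contra hcs
        obtain ⟨i, hi⟩ : ∃ i, s i ≠ 0 := by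
          by_contra hc; push_neg at hc; exact hs (Finsupp.ext hc)
        have hmem : s ∈ Q.support := mem_support_iff.mpr hcs
        have := (totalDegree_eq_zero_iff σ Q).mp h0 s hmem i
        exact hi this
    simp [pderiv_C] at hQ
  -- now bound the total degree of the derivative
  have hwrite : pderiv j Q = ∑ s ∈ Q.support, monomial (s - Finsupp.single j 1) (coeff s Q * s j) := by
    conv_lhs => rw [Q.as_sum]
    rw [map_sum]
    exact Finset.sum_congr rfl fun s _ => pderiv_monomial
  rw [hwrite]
  refine lt_of_le_of_lt (totalDegree_finset_sum _ _) ?_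
  rw [Finset.sup_lt_iff (by exact_mod_cast hdeg)]
  intro s hsmem
  rcases eq_or_ne (s j) 0 with hsj | hsj
  · simp [hsj]
    omega
  · set t : σ →₀ ℕ := s - Finsupp.single j 1 with ht
    refine lt_of_le_of_lt (totalDegree_monomial_le _ _) ?_
    have hid : (t.sum fun _ ↦ id) = t.sum fun _ n => n := rfl
    rw [hid]
    have hle : s.sum (fun _ n => n) ≤ Q.totalDegree := le_totalDegree hsmem
    have hlt : t.sum (fun _ n => n) < s.sum (fun _ n => n) := by
      have hsupp : j ∈ s.support := Finsupp.mem_support_iff.mpr hsj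
      rw [Finsupp.sum, Finsupp.sum]
      have htapp : ∀ i, t i = s i - (Finsupp.single j 1) i := fun i => Finsupp.tsub_apply s _ i
      have hsub : t.support ⊆ s.support := by
        intro i hi
        rw [Finsupp.mem_support_iff] at hi ⊢
        intro h0
        apply hi
        rw [htapp i, h0]; omega
      calc ∑ i ∈ t.support, t i
          ≤ ∑ i ∈ s.support, t i :=
            Finset.sum_le_sum_of_subset_of_nonneg hsub (by intros; positivity)
        _ < ∑ i ∈ s.support, s i := by
            refine Finset.sum_lt_sum (fun i _ => ?_) ⟨j, hsupp, ?_⟩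
            · rw [htapp i]; omega
            · rw [htapp j, Finsupp.single_apply, if_pos rfl]; omega
    omega

lemma ker_lemma {K E : Type*} [Field K] [CharZero K] [Field E] [Algebra K E] {m : ℕ}
    {A : MvPolynomial (Fin m) K →ₐ[K] E}
    (hinj : Function.Injective A)
    (D : Fin m → Derivation ℤ E E)
    (hD : ∀ j R, D j (A R) = A (pderiv j R))
    {c : E} (hc : ∀ j, D j c = 0) :
    ∀ N (P Q : MvPolynomial (Fin m) K), Q.totalDegree ≤ N → Q ≠ 0 →
      c * A Q = A P → ∃ k : K, algebraMap K E k = c := by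
  have hAC : ∀ a : K, A (MvPolynomial.C a) = algebraMap K E a := fun a => by
    rw [← MvPolynomial.algebraMap_eq]; exact A.commutes a
  intro N
  induction N with
  | zero =>
    intro P Q hdeg hQ hPQ
    have hkey : ∀ j, c * A (pderiv j Q) = A (pderiv j P) := by
      intro j
      have h1 := congrArg (D j) hPQ
      rw [Derivation.leibniz, smul_eq_mul, smul_eq_mul, hc j, hD j, hD j] at h1
      rw [mul_zero, add_zero] at h1
      exact h1
    have hall : ∀ j, pderiv j Q = 0 := by
      intro j
      by_contra hj
      have := totalDegree_pderiv_lt' j Q hj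
      omega
    have hQC := eq_C_of_pderiv_eq_zero' Q hall
    have hPz : ∀ j, pderiv j P = 0 := by
      intro j
      apply hinj
      rw [map_zero, ← hkey j, hall j, map_zero, mul_zero]
    have hPC := eq_C_of_pderiv_eq_zero' P hPz
    have hq0 : coeff 0 Q ≠ 0 := fun h => hQ (by rw [hQC, h, map_zero])
    refine ⟨coeff 0 P * (coeff 0 Q)⁻¹, ?_⟩
    rw [hQC, hPC, hAC, hAC] at hPQ
    have hq0E : algebraMap K E (coeff 0 Q) ≠ 0 := fun h =>
      hq0 ((algebraMap K E).injective (by rw [h, map_zero]))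
    rw [map_mul, map_inv₀, ← hPQ]
    field_simp
  | succ N IH =>
    intro P Q hdeg hQ hPQ
    have hkey : ∀ j, c * A (pderiv j Q) = A (pderiv j P) := by
      intro j
      have h1 := congrArg (D j) hPQ
      rw [Derivation.leibniz, smul_eq_mul, smul_eq_mul, hc j, hD j, hD j] at h1
      rw [mul_zero, add_zero] at h1
      exact h1
    by_cases hall : ∀ j, pderiv j Q = 0
    · have hQC := eq_C_of_pderiv_eq_zero' Q hall
      have hPz : ∀ j, pderiv j P = 0 := by
        intro j
        apply hinj
        rw [map_zero, ← hkey j, hall j, map_zero, mul_zero]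
      have hPC := eq_C_of_pderiv_eq_zero' P hPz
      have hq0 : coeff 0 Q ≠ 0 := fun h => hQ (by rw [hQC, h, map_zero])
      refine ⟨coeff 0 P * (coeff 0 Q)⁻¹, ?_⟩
      rw [hQC, hPC, hAC, hAC] at hPQ
      have hq0E : algebraMap K E (coeff 0 Q) ≠ 0 := fun h =>
        hq0 ((algebraMap K E).injective (by rw [h, map_zero]))
      rw [map_mul, map_inv₀, ← hPQ]
      field_simp
    · push_neg at hall
      obtain ⟨j, hj⟩ := hall
      have hlt := totalDegree_pderiv_lt' j Q hj
      exact IH (pderiv j P) (pderiv j Q) (by omega) hj (hkey j)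

theorem stmt10 (K : Type*) [Field K] [CharZero K] (m : ℕ)
    (E : Type*) [Field E] [Algebra K E]
    (x : Fin m → E) (hx : AlgebraicIndependent K x)
    (halg : Algebra.IsAlgebraic (IntermediateField.adjoin K (Set.range x)) E)
    (D : Fin m → Derivation ℤ E E)
    (hDK : ∀ j, ∀ c : K, D j (algebraMap K E c) = 0)
    (hDx : ∀ j i, D j (x i) = if i = j then 1 else 0)
    (y : E) (hy : ∀ j, D j y = 0) :
    IsAlgebraic K y := by
  classical
  set F := IntermediateField.adjoin K (Set.range x) with hF
  set A : MvPolynomial (Fin m) K →ₐ[K] E := MvPolynomial.aeval x with hA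
  have hinj : Function.Injective A := hx
  -- D acts as formal partial derivative on polynomial expressions
  have hD : ∀ j R, D j (A R) = A (pderiv j R) := by
    intro j R
    induction R using MvPolynomial.induction_on with
    | C a =>
      have h1 : A (C a) = algebraMap K E a := by
        rw [hA, ← MvPolynomial.algebraMap_eq]; exact (MvPolynomial.aeval x).commutes a
      rw [h1, hDK j a, pderiv_C, map_zero]
    | add p q hp hq => simp [hp, hq]
    | mul_X p i hp =>
      have hAX : A (p * X i) = A p * x i := by rw [map_mul, hA, aeval_X]
      rcases eq_or_ne i j with rfl | hij
      · rw [hAX, Derivation.leibniz, smul_eq_mul, smul_eq_mul, hp, hDx i i, if_pos rfl,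
          pderiv_mul, pderiv_X_self, mul_one, map_add, map_mul]
        rw [show A (X i) = x i from aeval_X x i]
        ring
      · rw [hAX, Derivation.leibniz, smul_eq_mul, smul_eq_mul, hp, hDx j i, if_neg hij,
          pderiv_mul, pderiv_X_of_ne hij, map_add, map_mul, map_mul, map_zero,
          show A (X i) = x i from aeval_X x i]
        ring
  -- every polynomial expression lies in F
  have haevalF : ∀ R : MvPolynomial (Fin m) K, A R ∈ F := by
    intro R
    have h1 : A R ∈ Algebra.adjoin K (Set.range x) := by
      rw [Algebra.adjoin_range_eq_range_aeval]
      exact ⟨R, rfl⟩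
    exact IntermediateField.algebra_adjoin_le_adjoin K _ h1
  -- D maps F into F
  have hDF : ∀ z ∈ F, ∀ j, D j z ∈ F := by
    intro z hz j
    obtain ⟨r, s, hrs⟩ := (IntermediateField.mem_adjoin_range_iff K x z).mp hz
    rcases eq_or_ne (A s) 0 with hs | hs
    · rw [hrs, hs, div_zero, map_zero]
      exact zero_mem F
    · have hz' : z * A s = A r := by rw [hrs]; exact div_mul_cancel₀ _ hs
      have hDz : D j z * A s + z * A (pderiv j s) = A (pderiv j r) := by
        have h1 := congrArg (D j) hz'
        rw [Derivation.leibniz, smul_eq_mul, smul_eq_mul, hD, hD] at h1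
        linear_combination h1
      have h2 : D j z = (A (pderiv j r) - z * A (pderiv j s)) / A s := by
        field_simp
        linear_combination hDz
      rw [h2]
      exact div_mem (sub_mem (haevalF _) (mul_mem hz (haevalF _))) (haevalF _)
  -- elements of F killed by all D j come from K
  have memK : ∀ z : E, z ∈ F → (∀ j, D j z = 0) → ∃ k : K, algebraMap K E k = z := by
    intro z hz hdz
    obtain ⟨r, s, hrs⟩ := (IntermediateField.mem_adjoin_range_iff K x z).mp hz
    rcases eq_or_ne (A s) 0 with hs | hs
    · refine ⟨0, ?_⟩
      rw [map_zero, hrs, hs, div_zero]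
    · have hsne : s ≠ 0 := fun h => hs (by rw [h, map_zero])
      have hz' : z * A s = A r := by rw [hrs]; exact div_mul_cancel₀ _ hs
      exact ker_lemma hinj D hD hdz s.totalDegree r s le_rfl hsne hz'
  -- minimal polynomial of y over F
  have hyF : IsIntegral F y := (halg.isAlgebraic y).isIntegral
  set p := minpoly F y with hp
  have hpmonic : p.Monic := minpoly.monic hyF
  have hpne : p ≠ 0 := hpmonic.ne_zero
  set n := p.natDegree with hn
  have hcn : (p.coeff n : E) = 1 := by
    rw [hn, hpmonic.coeff_natDegree]
    exact_mod_cast rfl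
  have haeval : ∑ i ∈ Finset.range (n + 1), (p.coeff i : E) * y ^ i = 0 := by
    have h0 := minpoly.aeval F y
    rw [← hp, Polynomial.aeval_eq_sum_range] at h0
    rw [← h0]
    refine Finset.sum_congr rfl fun i _ => ?_
    rw [Algebra.smul_def]
    rfl
  -- coefficients of p are killed by every D j
  have hcoeff : ∀ j i, D j ((p.coeff i : E)) = 0 := by
    intro j
    set q : Polynomial F :=
      ∑ i ∈ Finset.range n, Polynomial.C (⟨D j (p.coeff i : E), hDF _ (p.coeff i).2 j⟩ : F)
        * Polynomial.X ^ i with hq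
    have hqcoeff : ∀ i, i < n → (q.coeff i : E) = D j (p.coeff i : E) := by
      intro i hi
      rw [hq, Polynomial.finset_sum_coeff]
      rw [Finset.sum_eq_single i]
      · rw [Polynomial.coeff_C_mul, Polynomial.coeff_X_pow, if_pos rfl, mul_one]
      · intro b _ hbi
        rw [Polynomial.coeff_C_mul, Polynomial.coeff_X_pow, if_neg (Ne.symm hbi), mul_zero]
      · intro hni
        exact absurd (Finset.mem_range.mpr hi) hni
    have hDsum : ∑ i ∈ Finset.range (n + 1), D j (p.coeff i : E) * y ^ i = 0 := by
      have h1 := congrArg (D j) haeval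
      rw [map_sum, map_zero] at h1
      rw [← h1]
      refine Finset.sum_congr rfl fun i _ => ?_
      rw [Derivation.leibniz, smul_eq_mul, smul_eq_mul]
      have hyp : D j (y ^ i) = 0 := by
        rw [Derivation.leibniz_pow, hy j, smul_zero, smul_zero]
      rw [hyp, mul_zero, zero_add]
      ring
    have hDtop : D j (p.coeff n : E) = 0 := by rw [hcn]; exact (D j).map_one_eq_zero
    have haq : Polynomial.aeval y q = 0 := by
      rw [hq, map_sum]
      have h2 : ∀ i ∈ Finset.range n,
          Polynomial.aeval y (Polynomial.C (⟨D j (p.coeff i : E), hDF _ (p.coeff i).2 j⟩ : F)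
            * Polynomial.X ^ i) = D j (p.coeff i : E) * y ^ i := by
        intro i _
        rw [map_mul, Polynomial.aeval_C, map_pow, Polynomial.aeval_X]
        rfl
      rw [Finset.sum_congr rfl h2]
      rw [Finset.sum_range_succ, hDtop, zero_mul, add_zero] at hDsum
      exact hDsum
    have hq0 : q = 0 := by
      by_contra hq0
      have hd1 := minpoly.degree_le_of_ne_zero F y hq0 haq
      have hd2 : q.degree < p.degree := by
        rw [Polynomial.degree_eq_natDegree hpne]
        refine lt_of_le_of_lt (Polynomial.degree_sum_le _ _) ?_
        rw [Finset.sup_lt_iff (by exact_mod_cast WithBot.bot_lt_coe (n : ℕ))]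
        intro i hi
        refine lt_of_le_of_lt (Polynomial.degree_C_mul_X_pow_le _ _) ?_
        exact_mod_cast Finset.mem_range.mp hi
      rw [← hp] at hd1
      exact absurd hd1 (not_le_of_gt hd2)
    intro i
    rcases lt_trichotomy i n with hi | hi | hi
    · have := hqcoeff i hi
      rw [hq0, Polynomial.coeff_zero] at this
      rw [← this]
      exact_mod_cast rfl
    · rw [hi]; exact hDtop
    · have : p.coeff i = 0 := Polynomial.coeff_eq_zero_of_natDegree_lt (hn ▸ hi)
      rw [this]
      rw [show ((0 : F) : E) = 0 from rfl, map_zero]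
  -- pull coefficients back to K
  have hck : ∀ i, ∃ k : K, algebraMap K E k = (p.coeff i : E) := fun i =>
    memK _ (p.coeff i).2 (fun j => hcoeff j i)
  choose g hg using hck
  set r : Polynomial K := ∑ i ∈ Finset.range (n + 1), Polynomial.C (g i) * Polynomial.X ^ i
    with hr
  have hrcoeff : ∀ i, i < n + 1 → r.coeff i = g i := by
    intro i hi
    rw [hr, Polynomial.finset_sum_coeff, Finset.sum_eq_single i]
    · rw [Polynomial.coeff_C_mul, Polynomial.coeff_X_pow, if_pos rfl, mul_one]
    · intro b _ hbi
      rw [Polynomial.coeff_C_mul, Polynomial.coeff_X_pow, if_neg (Ne.symm hbi), mul_zero]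
    · intro hni
      exact absurd (Finset.mem_range.mpr hi) hni
  have hrne : r ≠ 0 := by
    intro h0
    have h1 : r.coeff n = g n := hrcoeff n (Nat.lt_succ_self n)
    rw [h0, Polynomial.coeff_zero] at h1
    have h2 : algebraMap K E (g n) = 1 := by rw [hg n, hcn]
    rw [← h1, map_zero] at h2
    exact zero_ne_one h2
  have hr0 : Polynomial.aeval y r = 0 := by
    rw [hr, map_sum]
    have h3 : ∀ i ∈ Finset.range (n + 1),
        Polynomial.aeval y (Polynomial.C (g i) * Polynomial.X ^ i)
          = (p.coeff i : E) * y ^ i := fun i _ => by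
      rw [map_mul, Polynomial.aeval_C, map_pow, Polynomial.aeval_X, hg i]
    rw [Finset.sum_congr rfl h3]
    exact haeval
  exact ⟨r, hrne, hr0⟩
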